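/- If f : [0,∞) → ℝ is continuous and lim_{n→∞} f(n·x) = 0 for every x ∈ (0,∞), then lim_{x→∞} f(x) = 0. -/

import Mathlib

open Topology Filter

lemma croft_key (f : ℝ → ℝ) (hf : ContinuousOn f (Set.Ici (0:ℝ)))
    (h : ∀ x : ℝ, 0 < x → Tendsto (fun n : ℕ => f (n * x)) atTop (𝓝 0))
    {ε : ℝ} (hε : 0 < ε) :
    ∃ N : ℕ, ∃ a b : ℝ, 0 < a ∧ a < b ∧
      ∀ x ∈ Set.Ioo a b, ∀ n : ℕ, N ≤ n → |f (n * x)| ≤ ε := by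
  -- closed sets in ℝ
  set C : ℕ → Set ℝ := fun N => ⋂ n ∈ Set.Ici N,
    (Set.Ici (0:ℝ) ∩ (fun x => f (n * x)) ⁻¹' Metric.closedBall 0 ε) with hC
  have hCclosed : ∀ N, IsClosed (C N) := by
    intro N
    refine isClosed_biInter fun n _ => ?_
    refine ContinuousOn.preimage_isClosed_of_isClosed ?_ isClosed_Ici
      Metric.isClosed_closedBall
    refine hf.comp (continuous_const.mul continuous_id).continuousOn ?_
    intro x hx
    exact mul_nonneg (Nat.cast_nonneg n) (Set.mem_Ici.1 hx)
  have hCmem : ∀ N x, x ∈ C N ↔ (0 ≤ x ∧ ∀ n : ℕ, N ≤ n → |f (n * x)| ≤ ε) := by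
    intro N x
    simp only [hC, Set.mem_iInter, Set.mem_inter_iff, Set.mem_preimage,
      Metric.mem_closedBall, Set.mem_Ici, Real.dist_eq, sub_zero]
    constructor
    · intro hx
      exact ⟨(hx N le_rfl).1, fun n hn => (hx n hn).2⟩
    · intro hx n hn
      exact ⟨hx.1, hx.2 n hn⟩
  -- Baire category on the subtype Ioi 0
  haveI : LocallyCompactSpace (Set.Ioi (0:ℝ)) := isOpen_Ioi.locallyCompactSpace
  haveI : Nonempty (Set.Ioi (0:ℝ)) := ⟨⟨1, by norm_num⟩⟩
  set g : ℕ → Set (Set.Ioi (0:ℝ)) := fun N => Subtype.val ⁻¹' C N with hg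
  have hgc : ∀ N, IsClosed (g N) := fun N => (hCclosed N).preimage continuous_subtype_val
  have hgU : ⋃ N, g N = Set.univ := by
    ext x
    simp only [Set.mem_iUnion, Set.mem_univ, iff_true, hg, Set.mem_preimage]
    have hx : (0:ℝ) < x := x.2
    have := (h x hx).eventually (eventually_abs_sub_lt 0 hε)
    simp only [sub_zero] at this
    obtain ⟨N, hN⟩ := this.exists_forall_of_atTop
    exact ⟨N, (hCmem N x).2 ⟨hx.le, fun n hn => (hN n hn).le⟩⟩
  obtain ⟨N, x, hx⟩ := nonempty_interior_of_iUnion_of_closed hgc hgU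
  -- extract an open interval
  obtain ⟨U, hU, hUeq⟩ := isOpen_induced_iff.1 (isOpen_interior (s := g N))
  have hxU : (x:ℝ) ∈ U := by
    have : x ∈ Subtype.val ⁻¹' U := hUeq ▸ hx
    exact this
  have hUsub : ∀ y : ℝ, y ∈ U → 0 < y → y ∈ C N := by
    intro y hy hy0
    have : (⟨y, hy0⟩ : Set.Ioi (0:ℝ)) ∈ Subtype.val ⁻¹' U := hy
    rw [hUeq] at this
    have h2 : (⟨y, hy0⟩ : Set.Ioi (0:ℝ)) ∈ g N := interior_subset this
    exact h2
  obtain ⟨r, hr, hball⟩ := Metric.isOpen_iff.1 hU (x:ℝ) hxU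
  have hx0 : (0:ℝ) < x := x.2
  refine ⟨N, max ((x:ℝ) - r) ((x:ℝ)/2), (x:ℝ) + r, ?_, ?_, ?_⟩
  · exact lt_max_of_lt_right (by linarith)
  · exact max_lt (by linarith) (by linarith)
  · intro y hy n hn
    have hy1 : (x:ℝ) - r < y := lt_of_le_of_lt (le_max_left _ _) hy.1
    have hy0 : 0 < y := lt_of_lt_of_le (lt_max_of_lt_right (by linarith : (0:ℝ) < (x:ℝ)/2)) hy.1.le
    have hyU : y ∈ U := hball (by rw [Real.ball_eq_Ioo]; exact ⟨hy1, hy.2⟩)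
    exact ((hCmem N y).1 (hUsub y hyU hy0)).2 n hn

/-- Croft's lemma: if `f` is continuous on `[0,∞)` and `f(n·x) → 0` as `n → ∞` for every
`x > 0`, then `f(x) → 0` as `x → ∞`. -/
theorem croft (f : ℝ → ℝ) (hf : ContinuousOn f (Set.Ici (0:ℝ)))
    (h : ∀ x : ℝ, 0 < x → Tendsto (fun n : ℕ => f (n * x)) atTop (𝓝 0)) :
    Tendsto f atTop (𝓝 0) := by
  rw [NormedAddCommGroup.tendsto_nhds_zero]
  intro ε hε
  obtain ⟨N, a, b, ha, hab, hkey⟩ := croft_key f hf h (half_pos hε)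
  have hb : (0:ℝ) < b := ha.trans hab
  have hba : (0:ℝ) < b - a := by linarith
  filter_upwards [eventually_gt_atTop (max ((N:ℝ) * b) (a * b / (b - a)))] with y hy
  have hy1 : (N:ℝ) * b < y := lt_of_le_of_lt (le_max_left _ _) hy
  have hy2 : a * b / (b - a) < y := lt_of_le_of_lt (le_max_right _ _) hy
  have hy0 : 0 < y := lt_of_le_of_lt (by positivity) hy2
  set n : ℕ := ⌊y / b⌋₊ + 1 with hn
  have hn0 : 0 < (n:ℝ) := by positivity
  have hnb : y / b < (n:ℝ) := by
    have := Nat.lt_floor_add_one (y / b)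
    push_cast [hn]
    push_cast at this
    linarith
  have hna : (n:ℝ) < y / a := by
    have h1 : (n:ℝ) ≤ y / b + 1 := by
      have := Nat.floor_le (by positivity : (0:ℝ) ≤ y / b)
      push_cast [hn]
      linarith
    have h2 : y / b + 1 < y / a := by
      rw [div_add' _ _ _ hb.ne', div_lt_div_iff₀ hb ha]
      rw [div_lt_iff₀ hba] at hy2
      nlinarith
    linarith
  have hnN : N ≤ n := by
    have : (N:ℝ) < (n:ℝ) := by
      have : (N:ℝ) < y / b := (lt_div_iff₀ hb).2 hy1
      linarith
    exact_mod_cast this.le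
  have hmem : y / n ∈ Set.Ioo a b := by
    constructor
    · rw [lt_div_iff₀ hn0]
      have := (lt_div_iff₀ ha).1 hna
      linarith
    · rw [div_lt_iff₀ hn0]
      have := (div_lt_iff₀ hb).1 hnb
      linarith
  have := hkey (y / n) hmem n hnN
  rw [mul_div_cancel₀ _ hn0.ne'] at this
  calc ‖f y‖ = |f y| := rfl
    _ ≤ ε / 2 := this
    _ < ε := half_lt_self hε
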